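/- Let p > 1, b > -p/(n(p-1)), b ≠ 0, a = nb/(nb(p-1)+p), and let U(x,t) = t^{-a/b} B(t^{-a/(nb)} x) where B(ξ) = (C - |ξ|^{p/(p-1)})_+^{1/b} (for b > 0) or (C + |ξ|^{p/(p-1)})^{1/b} (for -p/(n(p-1)) < b < 0) is the Barenblatt profile with unit mass. Then the p-Rényi entropy power N_b(U(·,t)) = (∫_{ℝⁿ} U(x,t)^{b+1} dx)^{-1/a} is a linear function of t: N_b(U(·,t)) = N_b(U(·,1))·t. -/
import Mathlib

open MeasureTheory

theorem stmt16 (n : ℕ) (hn : 1 ≤ n) (p b a C : ℝ) (hp : 1 < p) (hb : b ≠ 0)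
    (hb' : -p / ((n : ℝ) * (p - 1)) < b) (hC : 0 < C)
    (ha : a = (n : ℝ) * b / ((n : ℝ) * b * (p - 1) + p)) :
    let q := p / (p - 1)
    let B : EuclideanSpace ℝ (Fin n) → ℝ :=
      fun ξ => if 0 < b then (max (C - ‖ξ‖ ^ q) 0) ^ (1 / b) else (C + ‖ξ‖ ^ q) ^ (1 / b)
    let U : EuclideanSpace ℝ (Fin n) → ℝ → ℝ :=
      fun x t => t ^ (-a / b) * B ((t ^ (-a / ((n : ℝ) * b))) • x)
    (∫ x, B x = 1) →
    ∀ t : ℝ, 0 < t →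
      (∫ x, U x t ^ (b + 1)) ^ (-1 / a) = (∫ x, U x 1 ^ (b + 1)) ^ (-1 / a) * t := by
  intro q B U hB1 t ht
  have hnpos : (0 : ℝ) < n := by exact_mod_cast hn
  have hn0 : (n : ℝ) ≠ 0 := ne_of_gt hnpos
  have hp1 : (0 : ℝ) < p - 1 := by linarith
  have hden : 0 < (n : ℝ) * b * (p - 1) + p := by
    have h := (div_lt_iff₀ (by positivity : (0:ℝ) < (n:ℝ) * (p - 1))).mp hb'
    nlinarith
  have ha0 : a ≠ 0 := by
    rw [ha]
    exact div_ne_zero (mul_ne_zero hn0 hb) (ne_of_gt hden)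
  have hBnn : ∀ ξ, 0 ≤ B ξ := by
    intro ξ
    simp only [B]
    split
    · positivity
    · positivity
  have hU1 : (∫ x, U x 1 ^ (b + 1)) = ∫ x, B x ^ (b + 1) := by
    simp [U, Real.one_rpow]
  have hI : 0 ≤ ∫ x, B x ^ (b + 1) :=
    integral_nonneg fun x => Real.rpow_nonneg (hBnn x) _
  have hlam : (0 : ℝ) < t ^ (-a / ((n : ℝ) * b)) := Real.rpow_pos_of_pos ht _
  have hfr : Module.finrank ℝ (EuclideanSpace ℝ (Fin n)) = n := by
    simp [finrank_euclideanSpace]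
  have key : (∫ x, U x t ^ (b + 1)) = t ^ (-a) * ∫ x, B x ^ (b + 1) := by
    have step1 : (∫ x, U x t ^ (b + 1))
        = ∫ x, t ^ (-a / b * (b + 1)) * B ((t ^ (-a / ((n : ℝ) * b))) • x) ^ (b + 1) := by
      refine integral_congr_ae (Filter.Eventually.of_forall fun x => ?_)
      simp only [U]
      rw [Real.mul_rpow (Real.rpow_nonneg ht.le _) (hBnn _), ← Real.rpow_mul ht.le]
    rw [step1, integral_const_mul,
      Measure.integral_comp_smul_of_nonneg volume
        (fun y => B y ^ (b + 1)) (t ^ (-a / ((n : ℝ) * b))) (hR := hlam.le),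
      hfr, smul_eq_mul, ← mul_assoc]
    congr 1
    rw [← Real.rpow_natCast (t ^ (-a / ((n : ℝ) * b))) n, ← Real.rpow_mul ht.le,
      ← Real.rpow_neg ht.le, ← Real.rpow_add ht]
    congr 1
    field_simp
    ring
  rw [key, hU1, Real.mul_rpow (Real.rpow_nonneg ht.le _) hI,
    ← Real.rpow_mul ht.le]
  rw [show -a * (-1 / a) = 1 by field_simp, Real.rpow_one, mul_comm]
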